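/- Let F, G preserve colimits of λ-chains and let (φ, ψ) be a λ-ary G-identity, φ, ψ : G → F_λ. Let D be the diagram in the category of monads on C given by the two monad morphisms φ_λ, ψ_λ : M(G) ⇉ M(F) (the unique monad morphisms extending φ and ψ). Then the category Alg(F, (φ, ψ)) of F-algebras satisfying (φ, ψ) is concretely isomorphic over C to the category D-alg of algebras for the diagram D of monads (i.e., Eilenberg–Moore M(F)-algebras β : F_λ A → A for which β ∘ (φ_λ)_A = β ∘ (ψ_λ)_A). -/

import Mathlib

open CategoryTheory CategoryTheory.Limits

universe v u

/-- The free-algebra (term functor) construction for an endofunctor `F` on a cocomplete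
category: term functors `Fo n` for each ordinal `n`, connecting natural transformations
`w`, coproduct injections `q n : F ∘ Fₙ ⟶ F_{n+1}` and `ι n : Id ⟶ Fₙ`, where
`F₀ = Id` (up to iso, witnessed by `ι 0` being invertible), `F_{n+1} = F Fₙ + Id`
(witnessed by the binary-coproduct universal property), and `Fₗ = colim_{m<l} F_m` at
limit ordinals (witnessed by the hand-rolled colimit universal property). -/
structure TermConstruction {C : Type u} [Category.{v} C] (F : C ⥤ C) where
  Fo : Ordinal.{v} → C ⥤ C
  w : ∀ {m n : Ordinal.{v}}, m ≤ n → (Fo m ⟶ Fo n)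
  q : ∀ n : Ordinal.{v}, Fo n ⋙ F ⟶ Fo (n + 1)
  ι : ∀ n : Ordinal.{v}, 𝟭 C ⟶ Fo n
  iso0 : IsIso (ι 0)
  w_refl : ∀ n : Ordinal.{v}, w (le_refl n) = 𝟙 (Fo n)
  w_trans : ∀ {m n p : Ordinal.{v}} (h₁ : m ≤ n) (h₂ : n ≤ p), w h₁ ≫ w h₂ = w (h₁.trans h₂)
  ι_w : ∀ {m n : Ordinal.{v}} (h : m ≤ n), ι m ≫ w h = ι n
  q_w : ∀ {m n : Ordinal.{v}} (h : m ≤ n),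
      Functor.whiskerRight (w h) F ≫ q n = q m ≫ w (add_le_add_left h 1)
  succ_isColimit : ∀ (n : Ordinal.{v}) (A : C),
      Nonempty (IsColimit (BinaryCofan.mk ((q n).app A) ((ι (n + 1)).app A)))
  limit_exists_unique : ∀ (n : Ordinal.{v}), Order.IsSuccLimit n → ∀ (A X : C)
      (g : ∀ m : Ordinal.{v}, m < n → ((Fo m).obj A ⟶ X)),
      (∀ (m m' : Ordinal.{v}) (h : m ≤ m') (h' : m' < n),
        (w h).app A ≫ g m' h' = g m (lt_of_le_of_lt h h')) →
      ∃! k : (Fo n).obj A ⟶ X,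
        ∀ (m : Ordinal.{v}) (h : m < n), (w h.le).app A ≫ k = g m h

/-- The term-evaluations `ε n : Fₙ A ⟶ A` of an `F`-algebra `(A, α)`, defined recursively by
`ε 0 = id` (transported along `ι 0`), `ε (n+1) = [α ∘ F (ε n), id]` and colimits at limit
ordinals. -/
structure TermEval {C : Type u} [Category.{v} C] (F : C ⥤ C) (T : TermConstruction F)
    (A : C) (α : F.obj A ⟶ A) where
  ε : ∀ n : Ordinal.{v}, (T.Fo n).obj A ⟶ A
  ε_zero : (T.ι 0).app A ≫ ε 0 = 𝟙 A
  ε_succ_q : ∀ n : Ordinal.{v}, (T.q n).app A ≫ ε (n + 1) = F.map (ε n) ≫ α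
  ε_succ_ι : ∀ n : Ordinal.{v}, (T.ι (n + 1)).app A ≫ ε (n + 1) = 𝟙 A
  ε_limit : ∀ (n : Ordinal.{v}), Order.IsSuccLimit n →
      ∀ (m : Ordinal.{v}) (h : m < n), (T.w h.le).app A ≫ ε n = ε m

/-- The chain construction extending a natural transformation `ρ : G ⟶ F_λ` to
transformations `ρ_k : G_k ⟶ F_λ` on the term functors of `G`:  `ρ₁ = [ρ, η]`,
`ρ_{k+1} = [μ ∘ ρ F_λ ∘ G ρ_k, η]` (where `η = ι_λ` is the unit and `μ` the multiplication of
the free monad on `F`), with colimits at limit ordinals. -/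
structure ChainExtension {C : Type u} [Category.{v} C] (F G : C ⥤ C)
    (TF : TermConstruction F) (TG : TermConstruction G) (l : Ordinal.{v})
    (μ : TF.Fo l ⋙ TF.Fo l ⟶ TF.Fo l) (ρ : G ⟶ TF.Fo l) where
  ρo : ∀ k : Ordinal.{v}, TG.Fo k ⟶ TF.Fo l
  ρo_ι : ∀ k : Ordinal.{v}, TG.ι k ≫ ρo k = TF.ι l
  ρo_one : ∀ A : C,
      G.map ((TG.ι 0).app A) ≫ (TG.q 0).app A ≫ (ρo (0 + 1)).app A = ρ.app A
  ρo_succ : ∀ (k : Ordinal.{v}) (A : C),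
      (TG.q k).app A ≫ (ρo (k + 1)).app A =
        G.map ((ρo k).app A) ≫ ρ.app ((TF.Fo l).obj A) ≫ μ.app A
  ρo_limit : ∀ (k : Ordinal.{v}), Order.IsSuccLimit k → ∀ (j : Ordinal.{v}) (h : j < k),
      TG.w h.le ≫ ρo k = ρo j

section Helpers

variable {C : Type u} [Category.{v} C] {F : C ⥤ C} (T : TermConstruction F)

lemma TermConstruction.hom_ext_succ (n : Ordinal.{v}) (A : C) {X : C}
    {k₁ k₂ : (T.Fo (n + 1)).obj A ⟶ X}
    (h1 : (T.q n).app A ≫ k₁ = (T.q n).app A ≫ k₂)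
    (h2 : (T.ι (n + 1)).app A ≫ k₁ = (T.ι (n + 1)).app A ≫ k₂) : k₁ = k₂ := by
  obtain ⟨hc⟩ := T.succ_isColimit n A
  exact BinaryCofan.IsColimit.hom_ext hc h1 h2

lemma TermConstruction.hom_ext_limit (n : Ordinal.{v}) (hn : Order.IsSuccLimit n) (A : C) {X : C}
    {k₁ k₂ : (T.Fo n).obj A ⟶ X}
    (h : ∀ (m : Ordinal.{v}) (hm : m < n), (T.w hm.le).app A ≫ k₁ = (T.w hm.le).app A ≫ k₂) :
    k₁ = k₂ := by
  obtain ⟨k, hk, huniq⟩ := T.limit_exists_unique n hn A X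
    (fun m hm => (T.w hm.le).app A ≫ k₁)
    (by
      intro m m' hle h'
      rw [← Category.assoc, ← NatTrans.comp_app, T.w_trans])
  have e₁ := huniq k₁ (fun m hm => rfl)
  have e₂ := huniq k₂ (fun m hm => (h m hm).symm)
  rw [e₁, e₂]

/-- The chain of term functors evaluated at `A`, below `l`. -/
def TermConstruction.chainDiagram (l : Ordinal.{v}) (A : C) :
    {m : Ordinal.{v} // m < l} ⥤ C where
  obj m := (T.Fo m.1).obj A
  map {m m'} f := (T.w (leOfHom f : m.1 ≤ m'.1)).app A
  map_id m := by
    show (T.w _).app A = _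
    rw [show (T.w (le_refl m.1) : T.Fo m.1 ⟶ T.Fo m.1) = 𝟙 _ from T.w_refl m.1]; rfl
  map_comp {m m' m''} f g := by rw [← NatTrans.comp_app, T.w_trans]

/-- The colimit cocone over the chain, with point `Fₗ A`. -/
def TermConstruction.chainCocone (l : Ordinal.{v}) (A : C) :
    Cocone (T.chainDiagram l A) where
  pt := (T.Fo l).obj A
  ι :=
    { app := fun m => (T.w m.2.le).app A
      naturality := fun m m' f => by
        dsimp [TermConstruction.chainDiagram]
        rw [← NatTrans.comp_app, T.w_trans, Category.comp_id] }

lemma TermConstruction.chain_compat (l : Ordinal.{v}) (A : C)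
    (s : Cocone (T.chainDiagram l A)) :
    ∀ (m m' : Ordinal.{v}) (h : m ≤ m') (h' : m' < l),
      (T.w h).app A ≫ s.ι.app ⟨m', h'⟩ = s.ι.app ⟨m, lt_of_le_of_lt h h'⟩ := by
  intro m m' hle h'
  have := s.ι.naturality (homOfLE (show (⟨m, lt_of_le_of_lt hle h'⟩ :
    {m : Ordinal.{v} // m < l}) ≤ ⟨m', h'⟩ from hle))
  dsimp [TermConstruction.chainDiagram] at this
  rw [Category.comp_id] at this
  exact this

noncomputable def TermConstruction.chainIsColimit (l : Ordinal.{v}) (hl : Order.IsSuccLimit l) (A : C) :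
    IsColimit (T.chainCocone l A) where
  desc s := (T.limit_exists_unique l hl A s.pt (fun m hm => s.ι.app ⟨m, hm⟩)
    (T.chain_compat l A s)).choose
  fac s m := (T.limit_exists_unique l hl A s.pt (fun m hm => s.ι.app ⟨m, hm⟩)
    (T.chain_compat l A s)).choose_spec.1 m.1 m.2
  uniq s k hk := (T.limit_exists_unique l hl A s.pt (fun m hm => s.ι.app ⟨m, hm⟩)
    (T.chain_compat l A s)).choose_spec.2 k (fun m hm => hk ⟨m, hm⟩)

lemma TermConstruction.hom_ext_map (l : Ordinal.{v}) (hl : Order.IsSuccLimit l) (A : C)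
    (H : C ⥤ C) [PreservesColimitsOfShape {m : Ordinal.{v} // m < l} H] {X : C}
    {k₁ k₂ : H.obj ((T.Fo l).obj A) ⟶ X}
    (h : ∀ (m : Ordinal.{v}) (hm : m < l),
      H.map ((T.w hm.le).app A) ≫ k₁ = H.map ((T.w hm.le).app A) ≫ k₂) : k₁ = k₂ := by
  have hc := isColimitOfPreserves H (T.chainIsColimit l hl A)
  exact hc.hom_ext (fun m => h m.1 m.2)

section EvalLemmas

variable (l : Ordinal.{v})

lemma TermEval.unit (hl : Order.IsSuccLimit l) {A : C} {α : F.obj A ⟶ A} (E : TermEval F T A α) :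
    (T.ι l).app A ≫ E.ε l = 𝟙 A := by
  have h0 : (0 : Ordinal.{v}) < l := hl.pos
  have e : (T.ι (0 : Ordinal.{v}) ≫ T.w h0.le).app A = (T.ι l).app A := by rw [T.ι_w]
  rw [← e, NatTrans.comp_app, Category.assoc, E.ε_limit l hl 0 h0, E.ε_zero]

lemma TermEval.key (hl : Order.IsSuccLimit l)
    [PreservesColimitsOfShape {m : Ordinal.{v} // m < l} F]
    (υ : T.Fo l ⋙ F ⟶ T.Fo l)
    (hυ : ∀ (n : Ordinal.{v}) (hn : n < l) (hn1 : n + 1 ≤ l) (A : C),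
      F.map ((T.w hn.le).app A) ≫ υ.app A = (T.q n).app A ≫ (T.w hn1).app A)
    {A : C} {α : F.obj A ⟶ A} (E : TermEval F T A α) :
    υ.app A ≫ E.ε l = F.map (E.ε l) ≫ α := by
  apply T.hom_ext_map l hl A F
  intro n hn
  have hn1 : n + 1 < l := by rw [Ordinal.add_one_eq_succ]; exact hl.succ_lt hn
  calc F.map ((T.w hn.le).app A) ≫ υ.app A ≫ E.ε l
      = (F.map ((T.w hn.le).app A) ≫ υ.app A) ≫ E.ε l := by rw [Category.assoc]
    _ = ((T.q n).app A ≫ (T.w hn1.le).app A) ≫ E.ε l := by rw [hυ n hn hn1.le A]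
    _ = (T.q n).app A ≫ (T.w hn1.le).app A ≫ E.ε l := by rw [Category.assoc]
    _ = (T.q n).app A ≫ E.ε (n + 1) := by rw [E.ε_limit l hl (n + 1) hn1]
    _ = F.map (E.ε n) ≫ α := E.ε_succ_q n
    _ = F.map ((T.w hn.le).app A ≫ E.ε l) ≫ α := by rw [E.ε_limit l hl n hn]
    _ = F.map ((T.w hn.le).app A) ≫ F.map (E.ε l) ≫ α := by rw [F.map_comp, Category.assoc]

lemma TermEval.natural {A B : C} {α : F.obj A ⟶ A} {β : F.obj B ⟶ B}
    (EA : TermEval F T A α) (EB : TermEval F T B β)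
    (f : A ⟶ B) (hf : F.map f ≫ β = α ≫ f) (n : Ordinal.{v}) :
    EA.ε n ≫ f = (T.Fo n).map f ≫ EB.ε n := by
  induction n using Ordinal.limitRecOn with
  | zero =>
    haveI := T.iso0
    rw [← cancel_epi ((T.ι (0 : Ordinal.{v})).app A), ← Category.assoc, EA.ε_zero,
      ← Category.assoc, ← (T.ι (0 : Ordinal.{v})).naturality f]
    simp [EB.ε_zero]
  | add_one n IH =>
    apply T.hom_ext_succ n A
    · calc (T.q n).app A ≫ EA.ε (n + 1) ≫ f
          = (F.map (EA.ε n) ≫ α) ≫ f := by rw [← Category.assoc, EA.ε_succ_q n]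
        _ = F.map (EA.ε n) ≫ F.map f ≫ β := by rw [Category.assoc, ← hf]
        _ = F.map (EA.ε n ≫ f) ≫ β := by rw [F.map_comp, Category.assoc]
        _ = F.map ((T.Fo n).map f ≫ EB.ε n) ≫ β := by rw [IH]
        _ = F.map ((T.Fo n).map f) ≫ F.map (EB.ε n) ≫ β := by rw [F.map_comp, Category.assoc]
        _ = F.map ((T.Fo n).map f) ≫ (T.q n).app B ≫ EB.ε (n + 1) := by rw [EB.ε_succ_q n]
        _ = ((T.Fo n ⋙ F).map f ≫ (T.q n).app B) ≫ EB.ε (n + 1) := by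
              rw [Category.assoc]; rfl
        _ = ((T.q n).app A ≫ (T.Fo (n + 1)).map f) ≫ EB.ε (n + 1) := by
              rw [(T.q n).naturality f]
        _ = (T.q n).app A ≫ (T.Fo (n + 1)).map f ≫ EB.ε (n + 1) := by rw [Category.assoc]
    · calc (T.ι (n + 1)).app A ≫ EA.ε (n + 1) ≫ f
          = ((T.ι (n + 1)).app A ≫ EA.ε (n + 1)) ≫ f := by rw [Category.assoc]
        _ = f := by rw [EA.ε_succ_ι n]; simp
        _ = (f ≫ (T.ι (n + 1)).app B) ≫ EB.ε (n + 1) := by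
              rw [Category.assoc, EB.ε_succ_ι n, Category.comp_id]
        _ = ((T.ι (n + 1)).app A ≫ (T.Fo (n + 1)).map f) ≫ EB.ε (n + 1) := by
              rw [← (T.ι (n + 1)).naturality f]; rfl
        _ = (T.ι (n + 1)).app A ≫ (T.Fo (n + 1)).map f ≫ EB.ε (n + 1) := by rw [Category.assoc]
  | limit n hn IH =>
    apply T.hom_ext_limit n hn A
    intro m hm
    calc (T.w hm.le).app A ≫ EA.ε n ≫ f
        = ((T.w hm.le).app A ≫ EA.ε n) ≫ f := by rw [Category.assoc]
      _ = EA.ε m ≫ f := by rw [EA.ε_limit n hn m hm]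
      _ = (T.Fo m).map f ≫ EB.ε m := IH m hm
      _ = (T.Fo m).map f ≫ (T.w hm.le).app B ≫ EB.ε n := by rw [EB.ε_limit n hn m hm]
      _ = ((T.w hm.le).app A ≫ (T.Fo n).map f) ≫ EB.ε n := by
            rw [← Category.assoc, (T.w hm.le).naturality f]
      _ = (T.w hm.le).app A ≫ (T.Fo n).map f ≫ EB.ε n := by rw [Category.assoc]

end EvalLemmas

section ChainLemmas

variable {G : C ⥤ C} (TG : TermConstruction G) (l : Ordinal.{v})

lemma ChainExtension.comp_eval (hl : Order.IsSuccLimit l) (μ : T.Fo l ⋙ T.Fo l ⟶ T.Fo l)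
    (φ ψ : G ⟶ T.Fo l)
    (Φ : ChainExtension F G T TG l μ φ) (Ψ : ChainExtension F G T TG l μ ψ)
    {A : C} {α : F.obj A ⟶ A} (E : TermEval F T A α)
    (hμE : μ.app A ≫ E.ε l = (T.Fo l).map (E.ε l) ≫ E.ε l)
    (hvar : φ.app A ≫ E.ε l = ψ.app A ≫ E.ε l) (k : Ordinal.{v}) :
    (Φ.ρo k).app A ≫ E.ε l = (Ψ.ρo k).app A ≫ E.ε l := by
  have step : ∀ (ρ : G ⟶ T.Fo l) (Ξ : ChainExtension F G T TG l μ ρ) (k : Ordinal.{v}),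
      (TG.q k).app A ≫ (Ξ.ρo (k + 1)).app A ≫ E.ε l =
        G.map ((Ξ.ρo k).app A ≫ E.ε l) ≫ ρ.app A ≫ E.ε l := by
    intro ρ Ξ k
    calc (TG.q k).app A ≫ (Ξ.ρo (k + 1)).app A ≫ E.ε l
        = ((TG.q k).app A ≫ (Ξ.ρo (k + 1)).app A) ≫ E.ε l := by rw [Category.assoc]
      _ = (G.map ((Ξ.ρo k).app A) ≫ ρ.app ((T.Fo l).obj A) ≫ μ.app A) ≫ E.ε l := by
            rw [Ξ.ρo_succ k A]
      _ = G.map ((Ξ.ρo k).app A) ≫ ρ.app ((T.Fo l).obj A) ≫ μ.app A ≫ E.ε l := by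
            rw [Category.assoc, Category.assoc]
      _ = G.map ((Ξ.ρo k).app A) ≫ ρ.app ((T.Fo l).obj A) ≫ (T.Fo l).map (E.ε l) ≫ E.ε l := by
            rw [hμE]
      _ = G.map ((Ξ.ρo k).app A) ≫ (ρ.app ((T.Fo l).obj A) ≫ (T.Fo l).map (E.ε l)) ≫ E.ε l := by
            rw [Category.assoc]
      _ = G.map ((Ξ.ρo k).app A) ≫ (G.map (E.ε l) ≫ ρ.app A) ≫ E.ε l := by
            rw [← ρ.naturality (E.ε l)]
      _ = G.map ((Ξ.ρo k).app A ≫ E.ε l) ≫ ρ.app A ≫ E.ε l := by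
            rw [G.map_comp]; simp only [Category.assoc]
  induction k using Ordinal.limitRecOn with
  | zero =>
    haveI := TG.iso0
    rw [← cancel_epi ((TG.ι (0 : Ordinal.{v})).app A), ← Category.assoc, ← Category.assoc,
      ← NatTrans.comp_app, ← NatTrans.comp_app, Φ.ρo_ι, Ψ.ρo_ι]
  | add_one k IH =>
    apply TG.hom_ext_succ k A
    · rw [step φ Φ k, step ψ Ψ k, IH, hvar]
    · rw [← Category.assoc, ← Category.assoc, ← NatTrans.comp_app, ← NatTrans.comp_app,
        Φ.ρo_ι, Ψ.ρo_ι]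
  | limit k hk IH =>
    apply TG.hom_ext_limit k hk A
    intro m hm
    rw [← Category.assoc, ← Category.assoc, ← NatTrans.comp_app, ← NatTrans.comp_app,
      Φ.ρo_limit k hk m hm, Ψ.ρo_limit k hk m hm]
    exact IH m hm

lemma ChainExtension.var_of_rho (hl : Order.IsSuccLimit l) (μ : T.Fo l ⋙ T.Fo l ⟶ T.Fo l)
    (φ ψ : G ⟶ T.Fo l)
    (Φ : ChainExtension F G T TG l μ φ) (Ψ : ChainExtension F G T TG l μ ψ)
    {A : C} {X : C} (β : (T.Fo l).obj A ⟶ X)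
    (h3 : (Φ.ρo l).app A ≫ β = (Ψ.ρo l).app A ≫ β) :
    φ.app A ≫ β = ψ.app A ≫ β := by
  have h01 : (0 : Ordinal.{v}) + 1 < l := by
    rw [Ordinal.add_one_eq_succ]; exact hl.succ_lt hl.pos
  have hΦ : (Φ.ρo ((0 : Ordinal.{v}) + 1)).app A = (TG.w h01.le).app A ≫ (Φ.ρo l).app A := by
    rw [← NatTrans.comp_app, Φ.ρo_limit l hl ((0 : Ordinal.{v}) + 1) h01]
  have hΨ : (Ψ.ρo ((0 : Ordinal.{v}) + 1)).app A = (TG.w h01.le).app A ≫ (Ψ.ρo l).app A := by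
    rw [← NatTrans.comp_app, Ψ.ρo_limit l hl ((0 : Ordinal.{v}) + 1) h01]
  rw [← Φ.ρo_one A, ← Ψ.ρo_one A, hΦ, hΨ]
  simp only [Category.assoc]
  rw [h3]

end ChainLemmas

section Recover

variable (l : Ordinal.{v})

lemma TermEval.upsilon_beta (hl : Order.IsSuccLimit l)
    [PreservesColimitsOfShape {m : Ordinal.{v} // m < l} F]
    (υ : T.Fo l ⋙ F ⟶ T.Fo l)
    (hυ : ∀ (n : Ordinal.{v}) (hn : n < l) (hn1 : n + 1 ≤ l) (A : C),
      F.map ((T.w hn.le).app A) ≫ υ.app A = (T.q n).app A ≫ (T.w hn1).app A)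
    {A : C} (β : (T.Fo l).obj A ⟶ A)
    (E' : TermEval F T ((T.Fo l).obj A) (υ.app A))
    (hmult : E'.ε l ≫ β = (T.Fo l).map β ≫ β) :
    υ.app A ≫ β = F.map β ≫ F.map ((T.ι l).app A) ≫ υ.app A ≫ β := by
  have key' := TermEval.key T l hl υ hυ E'
  have unit' := TermEval.unit T l hl E'
  calc υ.app A ≫ β
      = F.map (𝟙 ((T.Fo l).obj A)) ≫ υ.app A ≫ β := by simp
    _ = F.map ((T.ι l).app ((T.Fo l).obj A) ≫ E'.ε l) ≫ υ.app A ≫ β := by rw [unit']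
    _ = F.map ((T.ι l).app ((T.Fo l).obj A)) ≫ (F.map (E'.ε l) ≫ υ.app A) ≫ β := by
          rw [F.map_comp]; simp only [Category.assoc]
    _ = F.map ((T.ι l).app ((T.Fo l).obj A)) ≫ (υ.app ((T.Fo l).obj A) ≫ E'.ε l) ≫ β := by
          rw [key']
    _ = F.map ((T.ι l).app ((T.Fo l).obj A)) ≫ υ.app ((T.Fo l).obj A) ≫
          (T.Fo l).map β ≫ β := by rw [Category.assoc, hmult]
    _ = F.map ((T.ι l).app ((T.Fo l).obj A)) ≫ ((T.Fo l ⋙ F).map β ≫ υ.app A) ≫ β := by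
          rw [show υ.app ((T.Fo l).obj A) ≫ (T.Fo l).map β ≫ β =
            (T.Fo l ⋙ F).map β ≫ υ.app A ≫ β from by
              rw [← Category.assoc, ← υ.naturality β, Category.assoc]]
          simp only [Category.assoc]
    _ = F.map ((T.ι l).app ((T.Fo l).obj A) ≫ (T.Fo l).map β) ≫ υ.app A ≫ β := by
          rw [F.map_comp]; simp only [Category.assoc]; rfl
    _ = F.map (β ≫ (T.ι l).app A) ≫ υ.app A ≫ β := by rw [← (T.ι l).naturality β]; rfl
    _ = F.map β ≫ F.map ((T.ι l).app A) ≫ υ.app A ≫ β := by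
          rw [F.map_comp]; simp only [Category.assoc]

lemma TermEval.eq_w_comp (hl : Order.IsSuccLimit l)
    [PreservesColimitsOfShape {m : Ordinal.{v} // m < l} F]
    (υ : T.Fo l ⋙ F ⟶ T.Fo l)
    (hυ : ∀ (n : Ordinal.{v}) (hn : n < l) (hn1 : n + 1 ≤ l) (A : C),
      F.map ((T.w hn.le).app A) ≫ υ.app A = (T.q n).app A ≫ (T.w hn1).app A)
    {A : C} (β : (T.Fo l).obj A ⟶ A)
    (hunit : (T.ι l).app A ≫ β = 𝟙 A)
    (E' : TermEval F T ((T.Fo l).obj A) (υ.app A))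
    (hmult : E'.ε l ≫ β = (T.Fo l).map β ≫ β)
    (E : TermEval F T A (F.map ((T.ι l).app A) ≫ υ.app A ≫ β)) :
    ∀ (n : Ordinal.{v}) (h : n ≤ l), E.ε n = (T.w h).app A ≫ β := by
  have hub := TermEval.upsilon_beta T l hl υ hυ β E' hmult
  intro n
  induction n using Ordinal.limitRecOn with
  | zero =>
    intro h
    haveI := T.iso0
    rw [← cancel_epi ((T.ι (0 : Ordinal.{v})).app A), E.ε_zero, ← Category.assoc,
      ← NatTrans.comp_app, T.ι_w h, hunit]
  | add_one n IH =>
    intro h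
    have hn : n < l := lt_of_lt_of_le (by rw [Ordinal.add_one_eq_succ]; exact Order.lt_succ n) h
    apply T.hom_ext_succ n A
    · calc (T.q n).app A ≫ E.ε (n + 1)
          = F.map (E.ε n) ≫ F.map ((T.ι l).app A) ≫ υ.app A ≫ β := E.ε_succ_q n
        _ = F.map ((T.w hn.le).app A ≫ β) ≫ F.map ((T.ι l).app A) ≫ υ.app A ≫ β := by
              rw [IH hn.le]
        _ = F.map ((T.w hn.le).app A) ≫ F.map β ≫ F.map ((T.ι l).app A) ≫ υ.app A ≫ β := by
              rw [F.map_comp]; simp only [Category.assoc]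
        _ = F.map ((T.w hn.le).app A) ≫ υ.app A ≫ β := by rw [← hub]
        _ = (F.map ((T.w hn.le).app A) ≫ υ.app A) ≫ β := by rw [Category.assoc]
        _ = ((T.q n).app A ≫ (T.w h).app A) ≫ β := by rw [hυ n hn h A]
        _ = (T.q n).app A ≫ (T.w h).app A ≫ β := by rw [Category.assoc]
    · rw [E.ε_succ_ι n, ← Category.assoc, ← NatTrans.comp_app, T.ι_w h, hunit]
  | limit n hn IH =>
    intro h
    apply T.hom_ext_limit n hn A
    intro m hm
    rw [E.ε_limit n hn m hm, IH m hm (le_trans hm.le h), ← Category.assoc,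
      ← NatTrans.comp_app, T.w_trans]

end Recover

lemma fsub_ext {D : Type*} [Category D] {P : D → Prop}
    {X Y : ObjectProperty.FullSubcategory P} (h : X.obj = Y.obj) : X = Y := by
  cases X; cases Y; cases h; rfl

lemma alg_ext {F' : C ⥤ C} {A : C} {α α' : F'.obj A ⟶ A} (h : α = α') :
    (⟨A, α⟩ : Endofunctor.Algebra F') = ⟨A, α'⟩ := by rw [h]

lemma eqToHom_f {F' : C ⥤ C} {P : Endofunctor.Algebra F' → Prop}
    {X Y : ObjectProperty.FullSubcategory P} (h : X = Y) :
    (eqToHom h : X ⟶ Y).hom.f =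
      eqToHom (congrArg (fun Z : ObjectProperty.FullSubcategory P => Z.obj.a) h) := by
  subst h; rfl

lemma my_functor_ext {C' : Type*} {D : Type*} [Category C'] [Category D] {K L : C' ⥤ D}
    (hobj : ∀ X, K.obj X = L.obj X)
    (hmap : ∀ (X Y : C') (f : X ⟶ Y),
      K.map f = eqToHom (hobj X) ≫ L.map f ≫ eqToHom (hobj Y).symm) : K = L :=
  CategoryTheory.Functor.ext hobj hmap

lemma map_eq_eqToHom {H : C ⥤ C} {P : Endofunctor.Algebra H → Prop}
    {X X' Y Y' : ObjectProperty.FullSubcategory P} {hX : X' = X} {hY : Y = Y'}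
    {g : X' ⟶ Y'} {f : X ⟶ Y}
    (h : g.hom.f = eqToHom (congrArg (fun Z : ObjectProperty.FullSubcategory P => Z.obj.a) hX) ≫ f.hom.f ≫
      eqToHom (congrArg (fun Z : ObjectProperty.FullSubcategory P => Z.obj.a) hY)) :
    g = eqToHom hX ≫ f ≫ eqToHom hY := by
  subst hX; subst hY
  apply InducedCategory.Hom.ext
  apply Endofunctor.Algebra.Hom.ext
  simpa using h

end Helpers

set_option maxHeartbeats 2000000 in
/-- Concrete isomorphism between the variety `Alg(F, (φ, ψ))` and the category of algebras for
the diagram `D` of monads given by the two monad morphisms `φ_λ, ψ_λ : M(G) ⟶ M(F)` (the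
unique monad morphisms extending `φ` and `ψ`, obtained by the chain construction):  the full
subcategory of `F`-algebras satisfying the `λ`-ary identity `(φ, ψ)` is isomorphic, over `C`,
to the full subcategory of `F_λ`-algebras which are Eilenberg–Moore algebras for the free
monad `M(F)` and are compatible with the diagram, i.e. `β ∘ (φ_λ)_A = β ∘ (ψ_λ)_A`. -/
theorem variety_iso_diagram_algebras {C : Type u} [Category.{v} C] [HasColimits C]
    (F G : C ⥤ C) (TF : TermConstruction F) (TG : TermConstruction G)
    (l : Ordinal.{v}) (hl : Order.IsSuccLimit l)
    [PreservesColimitsOfShape {m : Ordinal.{v} // m < l} F]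
    [PreservesColimitsOfShape {m : Ordinal.{v} // m < l} G]
    (Ev : ∀ (A : C) (α : F.obj A ⟶ A), TermEval F TF A α)
    (υ : TF.Fo l ⋙ F ⟶ TF.Fo l)
    (hυ : ∀ (n : Ordinal.{v}) (hn : n < l) (hn1 : n + 1 ≤ l) (A : C),
      F.map ((TF.w hn.le).app A) ≫ υ.app A = (TF.q n).app A ≫ (TF.w hn1).app A)
    (μ : TF.Fo l ⋙ TF.Fo l ⟶ TF.Fo l)
    (hμ : ∀ A : C, μ.app A = (Ev ((TF.Fo l).obj A) (υ.app A)).ε l)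
    (φ ψ : G ⟶ TF.Fo l)
    (Φ : ChainExtension F G TF TG l μ φ) (Ψ : ChainExtension F G TF TG l μ ψ) :
    ∃ (I : ObjectProperty.FullSubcategory (fun X : Endofunctor.Algebra F =>
            φ.app X.a ≫ (Ev X.a X.str).ε l = ψ.app X.a ≫ (Ev X.a X.str).ε l) ⥤
          ObjectProperty.FullSubcategory (fun Y : Endofunctor.Algebra (TF.Fo l) =>
            (TF.ι l).app Y.a ≫ Y.str = 𝟙 Y.a ∧
            μ.app Y.a ≫ Y.str = (TF.Fo l).map Y.str ≫ Y.str ∧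
            (Φ.ρo l).app Y.a ≫ Y.str = (Ψ.ρo l).app Y.a ≫ Y.str))
      (J : ObjectProperty.FullSubcategory (fun Y : Endofunctor.Algebra (TF.Fo l) =>
            (TF.ι l).app Y.a ≫ Y.str = 𝟙 Y.a ∧
            μ.app Y.a ≫ Y.str = (TF.Fo l).map Y.str ≫ Y.str ∧
            (Φ.ρo l).app Y.a ≫ Y.str = (Ψ.ρo l).app Y.a ≫ Y.str) ⥤
          ObjectProperty.FullSubcategory (fun X : Endofunctor.Algebra F =>
            φ.app X.a ≫ (Ev X.a X.str).ε l = ψ.app X.a ≫ (Ev X.a X.str).ε l)),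
      I ⋙ J = 𝟭 _ ∧ J ⋙ I = 𝟭 _ ∧
      I ⋙ ObjectProperty.ι _ ⋙ Endofunctor.Algebra.forget (TF.Fo l) =
        ObjectProperty.ι _ ⋙ Endofunctor.Algebra.forget F ∧
      J ⋙ ObjectProperty.ι _ ⋙ Endofunctor.Algebra.forget F =
        ObjectProperty.ι _ ⋙ Endofunctor.Algebra.forget (TF.Fo l) := by
  have hkey : ∀ (A : C) (α : F.obj A ⟶ A),
      υ.app A ≫ (Ev A α).ε l = F.map ((Ev A α).ε l) ≫ α :=
    fun A α => TermEval.key TF l hl υ hυ (Ev A α)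
  have hunit : ∀ (A : C) (α : F.obj A ⟶ A), (TF.ι l).app A ≫ (Ev A α).ε l = 𝟙 A :=
    fun A α => TermEval.unit TF l hl (Ev A α)
  have hmult : ∀ (A : C) (α : F.obj A ⟶ A),
      μ.app A ≫ (Ev A α).ε l = (TF.Fo l).map ((Ev A α).ε l) ≫ (Ev A α).ε l := by
    intro A α
    rw [hμ A]
    exact TermEval.natural TF (Ev ((TF.Fo l).obj A) (υ.app A)) (Ev A α)
      ((Ev A α).ε l) (hkey A α).symm l
  have hrec : ∀ (A : C) (β : (TF.Fo l).obj A ⟶ A),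
      (TF.ι l).app A ≫ β = 𝟙 A → μ.app A ≫ β = (TF.Fo l).map β ≫ β →
      (Ev A (F.map ((TF.ι l).app A) ≫ υ.app A ≫ β)).ε l = β := by
    intro A β h1 h2
    have h2' : (Ev ((TF.Fo l).obj A) (υ.app A)).ε l ≫ β = (TF.Fo l).map β ≫ β := by
      rw [← hμ A]; exact h2
    have := TermEval.eq_w_comp TF l hl υ hυ β h1 (Ev ((TF.Fo l).obj A) (υ.app A)) h2'
      (Ev A (F.map ((TF.ι l).app A) ≫ υ.app A ≫ β)) l (le_refl l)
    rw [this, TF.w_refl]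
    simp
  have hJmap : ∀ {A B : C} (β : (TF.Fo l).obj A ⟶ A) (β' : (TF.Fo l).obj B ⟶ B)
      (g : A ⟶ B), (TF.Fo l).map g ≫ β' = β ≫ g →
      F.map g ≫ F.map ((TF.ι l).app B) ≫ υ.app B ≫ β' =
        (F.map ((TF.ι l).app A) ≫ υ.app A ≫ β) ≫ g := by
    intro A B β β' g hg
    calc F.map g ≫ F.map ((TF.ι l).app B) ≫ υ.app B ≫ β'
        = F.map (g ≫ (TF.ι l).app B) ≫ υ.app B ≫ β' := by
          rw [F.map_comp]; simp only [Category.assoc]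
      _ = F.map ((TF.ι l).app A ≫ (TF.Fo l).map g) ≫ υ.app B ≫ β' := by
          rw [← (TF.ι l).naturality g]; rfl
      _ = F.map ((TF.ι l).app A) ≫ ((TF.Fo l ⋙ F).map g ≫ υ.app B) ≫ β' := by
          rw [F.map_comp]; simp only [Category.assoc]; rfl
      _ = F.map ((TF.ι l).app A) ≫ (υ.app A ≫ (TF.Fo l).map g) ≫ β' := by
          rw [υ.naturality g]
      _ = F.map ((TF.ι l).app A) ≫ υ.app A ≫ β ≫ g := by
          simp only [Category.assoc]; rw [hg]
      _ = (F.map ((TF.ι l).app A) ≫ υ.app A ≫ β) ≫ g := by simp only [Category.assoc]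
  refine ⟨?I, ?J, ?e1, ?e2, ?e3, ?e4⟩
  case I =>
    exact
      { obj := fun X =>
          ⟨⟨X.obj.a, (Ev X.obj.a X.obj.str).ε l⟩,
            hunit X.obj.a X.obj.str, hmult X.obj.a X.obj.str,
            ChainExtension.comp_eval TF TG l hl μ φ ψ Φ Ψ (Ev X.obj.a X.obj.str)
              (hmult X.obj.a X.obj.str) X.property l⟩,
        map := fun {X Y} f =>
          ⟨⟨f.hom.f, (TermEval.natural TF (Ev X.obj.a X.obj.str)
            (Ev Y.obj.a Y.obj.str) f.hom.f f.hom.h l).symm⟩⟩,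
        map_id := fun X => rfl,
        map_comp := fun f g => rfl }
  case J =>
    exact
      { obj := fun Y =>
          ⟨⟨Y.obj.a, F.map ((TF.ι l).app Y.obj.a) ≫ υ.app Y.obj.a ≫ Y.obj.str⟩, by
            have hε := hrec Y.obj.a Y.obj.str Y.property.1 Y.property.2.1
            show φ.app Y.obj.a ≫ _ = ψ.app Y.obj.a ≫ _
            rw [hε]
            exact ChainExtension.var_of_rho TF TG l hl μ φ ψ Φ Ψ Y.obj.str Y.property.2.2⟩,
        map := fun {X Y} f => ⟨⟨f.hom.f, hJmap X.obj.str Y.obj.str f.hom.f f.hom.h⟩⟩,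
        map_id := fun X => rfl,
        map_comp := fun f g => rfl }
  case e1 =>
    apply my_functor_ext
    swap
    · intro X
      obtain ⟨⟨A, α⟩, hX⟩ := X
      have h : F.map ((TF.ι l).app A) ≫ υ.app A ≫ (Ev A α).ε l = α := by
        rw [hkey A α, ← Category.assoc, ← F.map_comp, hunit A α]
        simp
      apply fsub_ext
      show (⟨A, F.map ((TF.ι l).app A) ≫ υ.app A ≫ (Ev A α).ε l⟩ : Endofunctor.Algebra F) =
        ⟨A, α⟩
      rw [h]
    · intro X Y f
      apply map_eq_eqToHom
      show f.hom.f = _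
      simp
  case e2 =>
    apply my_functor_ext
    swap
    · intro Y
      obtain ⟨⟨A, β⟩, h1, h2, h3⟩ := Y
      have h : (Ev A (F.map ((TF.ι l).app A) ≫ υ.app A ≫ β)).ε l = β := hrec A β h1 h2
      apply fsub_ext
      show (⟨A, (Ev A (F.map ((TF.ι l).app A) ≫ υ.app A ≫ β)).ε l⟩ :
        Endofunctor.Algebra (TF.Fo l)) = ⟨A, β⟩
      rw [h]
    · intro X Y f
      apply map_eq_eqToHom
      show f.hom.f = _
      simp
  case e3 => rfl
  case e4 => rfl
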